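/- Let F : ℝ^d × P₁(ℝ^d) → ℝ^m be locally differentiable at the empirical measure ψ^N = (1/N) ∑_{i=1}^N δ_{x_i} in the Wasserstein sense (i.e., there exists ∇_ψ F(x,ψ^N) ∈ L²_{ψ^N}(ℝ^d; ℝ^{m×d}) such that for every ν supported near ψ^N and every transport plan γ ∈ Γ(ψ^N,ν), F(x,ν) − F(x,ψ^N) = ∫ ∇_ψ F(x,ψ^N)(x₁)[x₂−x₁] dγ(x₁,x₂) + o(W_{2,γ}(ψ^N,ν))). Then the restriction F̃ : ℝ^d × (ℝ^d)^N → ℝ^m defined by F̃(x, (x₁,…,x_N)) = F(x, (1/N)∑δ_{x_i}) is differentiable at (x₁,…,x_N) and ∇_{x_i} F̃(x, x⃗) = (1/N) ∇_ψ F(x, ψ^N)(x_i) for every i = 1,…,N. -/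

import Mathlib

open MeasureTheory Filter Topology Set
open scoped ENNReal

private lemma integrable_dirac'' {α E : Type*} [MeasurableSpace α] [MeasurableSingletonClass α]
    [NormedAddCommGroup E] (f : α → E) (a : α) : Integrable f (Measure.dirac a) := by
  have h : f =ᵐ[Measure.dirac a] fun _ => f a := by
    rw [ae_dirac_eq]; exact eventually_pure.2 rfl
  exact (integrable_const _).congr h.symm

private lemma emp_integral {α E : Type*} [MeasurableSpace α] [MeasurableSingletonClass α]
    [NormedAddCommGroup E] [NormedSpace ℝ E] [CompleteSpace E] (N : ℕ) (f : α → E)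
    (p : Fin N → α) :
    ∫ z, f z ∂((N : ℝ≥0∞)⁻¹ • ∑ i : Fin N, Measure.dirac (p i)) =
      (N : ℝ)⁻¹ • ∑ i : Fin N, f (p i) := by
  rw [integral_smul_measure, integral_finset_sum_measure fun i _ => integrable_dirac'' f (p i),
    ENNReal.toReal_inv, ENNReal.toReal_natCast]
  congr 1
  exact Finset.sum_congr rfl fun i _ => integral_dirac f (p i)

private lemma emp_prob {α : Type*} [MeasurableSpace α] {N : ℕ} (hN : 0 < N) (p : Fin N → α) :
    IsProbabilityMeasure ((N : ℝ≥0∞)⁻¹ • ∑ i : Fin N, Measure.dirac (p i)) := by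
  constructor
  rw [Measure.smul_apply, Measure.finset_sum_apply]
  simp [ENNReal.inv_mul_cancel (by exact_mod_cast hN.ne' : (N : ℝ≥0∞) ≠ 0)]

private lemma emp_map {α β : Type*} [MeasurableSpace α] [MeasurableSpace β]
    {N : ℕ} (f : α → β) (hf : Measurable f) (p : Fin N → α) :
    ((N : ℝ≥0∞)⁻¹ • ∑ i : Fin N, Measure.dirac (p i)).map f
      = (N : ℝ≥0∞)⁻¹ • ∑ i : Fin N, Measure.dirac (f (p i)) := by
  ext s hs
  rw [Measure.map_apply hf hs, Measure.smul_apply, Measure.smul_apply,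
    Measure.finset_sum_apply, Measure.finset_sum_apply]
  congr 1
  refine Finset.sum_congr rfl fun i _ => ?_
  rw [Measure.dirac_apply' _ (hf hs), Measure.dirac_apply' _ hs]
  by_cases hm : f (p i) ∈ s
  · rw [Set.indicator_of_mem hm, Set.indicator_of_mem (Set.mem_preimage.mpr hm)]
    rfl
  · rw [Set.indicator_of_notMem hm,
      Set.indicator_of_notMem (fun hc => hm (Set.mem_preimage.mp hc))]

set_option maxHeartbeats 1000000 in
/-- If `F : ℝ^d × P₁(ℝ^d) → ℝ^m` is locally differentiable (in the Wasserstein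
sense) at the empirical measure `ψᴺ = (1/N) ∑ δ_{x_i}`, with differential
`G = ∇_ψ F(x, ψᴺ) ∈ L²_{ψᴺ}`, then the restriction
`F̃(x, x⃗) = F(x, (1/N) ∑ δ_{x_i})` is differentiable at `x⃗ = (x₁,…,x_N)` with
`∇_{x_i} F̃(x, x⃗) = (1/N) ∇_ψ F(x, ψᴺ)(x_i)`, i.e. its Fréchet derivative is
`v ↦ (1/N) ∑ᵢ G(xᵢ)[vᵢ]`. -/
theorem wasserstein_diff_implies_finite_dim_diff
    (d m N : ℕ) (hN : 0 < N)
    (F : EuclideanSpace ℝ (Fin d) → Measure (EuclideanSpace ℝ (Fin d)) →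
      EuclideanSpace ℝ (Fin m))
    (x : EuclideanSpace ℝ (Fin d)) (xv : Fin N → EuclideanSpace ℝ (Fin d))
    (G : EuclideanSpace ℝ (Fin d) →
      (EuclideanSpace ℝ (Fin d) →L[ℝ] EuclideanSpace ℝ (Fin m)))
    (hG : MemLp G 2 ((N : ℝ≥0∞)⁻¹ • ∑ i : Fin N, Measure.dirac (xv i)))
    (hdiff : ∀ R > (0:ℝ), ∃ e : ℝ → ℝ,
      Tendsto (fun t => e t / t) (nhdsWithin 0 (Ioi 0)) (nhds 0) ∧
      ∀ ν : Measure (EuclideanSpace ℝ (Fin d)), IsProbabilityMeasure ν →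
        ν {y | ∃ i, dist y (xv i) ≤ R}ᶜ = 0 →
        ∀ γ : Measure (EuclideanSpace ℝ (Fin d) × EuclideanSpace ℝ (Fin d)),
          IsProbabilityMeasure γ →
          γ.map Prod.fst = ((N : ℝ≥0∞)⁻¹ • ∑ i : Fin N, Measure.dirac (xv i)) →
          γ.map Prod.snd = ν →
          ‖F x ν - F x ((N : ℝ≥0∞)⁻¹ • ∑ i : Fin N, Measure.dirac (xv i)) -
              ∫ p, G p.1 (p.2 - p.1) ∂γ‖ ≤
            e (Real.sqrt (∫ p, ‖p.1 - p.2‖ ^ 2 ∂γ))) :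
    HasFDerivAt
      (fun y : Fin N → EuclideanSpace ℝ (Fin d) =>
        F x ((N : ℝ≥0∞)⁻¹ • ∑ i : Fin N, Measure.dirac (y i)))
      ((N : ℝ)⁻¹ • ∑ i : Fin N,
        (G (xv i)).comp (ContinuousLinearMap.proj i)) xv := by
  obtain ⟨e, he0, hebd⟩ := hdiff 1 one_pos
  set L : (Fin N → EuclideanSpace ℝ (Fin d)) →L[ℝ] EuclideanSpace ℝ (Fin m) :=
    ((N : ℝ)⁻¹ • ∑ i : Fin N, (G (xv i)).comp (ContinuousLinearMap.proj i)) with hL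
  have hLapp : ∀ h : Fin N → EuclideanSpace ℝ (Fin d),
      L h = (N : ℝ)⁻¹ • ∑ i : Fin N, G (xv i) (h i) := by
    intro h
    simp [hL, ContinuousLinearMap.sum_apply]
  rw [hasFDerivAt_iff_isLittleO_nhds_zero, Asymptotics.isLittleO_iff]
  intro ε hε
  -- get δ from the little-o property of e
  have hev : ∀ᶠ t in nhdsWithin (0:ℝ) (Ioi 0), |e t / t| < ε := by
    have := Metric.tendsto_nhds.mp he0 ε hε
    filter_upwards [this] with t ht
    simpa [Real.dist_eq, abs_div] using ht
  obtain ⟨δ, hδpos, hδ⟩ := Metric.mem_nhdsWithin_iff.mp hev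
  set δ' : ℝ := min δ 1 with hδ'
  have hδ'pos : 0 < δ' := lt_min hδpos one_pos
  filter_upwards [Metric.ball_mem_nhds (0 : Fin N → EuclideanSpace ℝ (Fin d)) hδ'pos]
    with h hh
  have hhn : ‖h‖ < δ' := by simpa using hh
  by_cases h0 : h = 0
  · simp [h0]
  -- the perturbed points and the coupling
  set y : Fin N → EuclideanSpace ℝ (Fin d) := xv + h with hy
  set ν : Measure (EuclideanSpace ℝ (Fin d)) :=
    (N : ℝ≥0∞)⁻¹ • ∑ i : Fin N, Measure.dirac (y i) with hν
  set γ : Measure (EuclideanSpace ℝ (Fin d) × EuclideanSpace ℝ (Fin d)) :=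
    (N : ℝ≥0∞)⁻¹ • ∑ i : Fin N, Measure.dirac (xv i, y i) with hγ
  have hνprob : IsProbabilityMeasure ν := emp_prob hN y
  have hγprob : IsProbabilityMeasure γ := emp_prob hN fun i => (xv i, y i)
  have hνsupp : ν {z | ∃ i, dist z (xv i) ≤ 1}ᶜ = 0 := by
    rw [hν, Measure.smul_apply, Measure.finset_sum_apply]
    have : ∀ i : Fin N, Measure.dirac (y i) {z | ∃ i, dist z (xv i) ≤ 1}ᶜ = 0 := by
      intro i
      rw [Measure.dirac_apply]
      have hyi : y i ∈ {z | ∃ i, dist z (xv i) ≤ 1} := by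
        refine ⟨i, ?_⟩
        have : dist (y i) (xv i) = ‖h i‖ := by
          simp [hy, dist_eq_norm]
        rw [this]
        calc ‖h i‖ ≤ ‖h‖ := norm_le_pi_norm h i
          _ ≤ 1 := le_of_lt (lt_of_lt_of_le hhn (min_le_right _ _))
      simp [Set.indicator_apply, hyi]
    simp [this]
  have hfst : γ.map Prod.fst = (N : ℝ≥0∞)⁻¹ • ∑ i : Fin N, Measure.dirac (xv i) := by
    rw [hγ, emp_map Prod.fst measurable_fst]
  have hsnd : γ.map Prod.snd = ν := by
    rw [hγ, hν, emp_map Prod.snd measurable_snd]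
  have key := hebd ν hνprob hνsupp γ hγprob hfst hsnd
  -- compute the integrals
  have hint1 : ∫ p, G p.1 (p.2 - p.1) ∂γ = L h := by
    rw [hγ, emp_integral N (fun p => G p.1 (p.2 - p.1)) (fun i => (xv i, y i)), hLapp]
    simp [hy]
  have hint2 : ∫ p, ‖p.1 - p.2‖ ^ 2 ∂γ = (N : ℝ)⁻¹ * ∑ i : Fin N, ‖h i‖ ^ 2 := by
    rw [hγ, emp_integral N (fun p => ‖p.1 - p.2‖ ^ 2) (fun i => (xv i, y i))]
    simp [hy, smul_eq_mul, norm_sub_rev]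
  set t : ℝ := Real.sqrt (∫ p, ‖p.1 - p.2‖ ^ 2 ∂γ) with ht
  have htval : t = Real.sqrt ((N : ℝ)⁻¹ * ∑ i : Fin N, ‖h i‖ ^ 2) := by rw [ht, hint2]
  have hNpos : (0:ℝ) < N := Nat.cast_pos.mpr hN
  have htpos : 0 < t := by
    rw [htval]
    apply Real.sqrt_pos.mpr
    apply mul_pos (inv_pos.mpr hNpos)
    obtain ⟨i, hi⟩ : ∃ i, h i ≠ 0 := by
      by_contra hc
      push_neg at hc
      exact h0 (funext hc)
    exact Finset.sum_pos' (fun j _ => by positivity)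
      ⟨i, Finset.mem_univ i, pow_pos (norm_pos_iff.mpr hi) 2⟩
  have htle : t ≤ ‖h‖ := by
    rw [htval]
    have hsum : (N : ℝ)⁻¹ * ∑ i : Fin N, ‖h i‖ ^ 2 ≤ ‖h‖ ^ 2 := by
      have hb : ∑ i : Fin N, ‖h i‖ ^ 2 ≤ ∑ _i : Fin N, ‖h‖ ^ 2 :=
        Finset.sum_le_sum fun i _ => by
          have := norm_le_pi_norm h i
          nlinarith [norm_nonneg (h i)]
      rw [Finset.sum_const, Finset.card_univ, Fintype.card_fin] at hb
      calc (N : ℝ)⁻¹ * ∑ i : Fin N, ‖h i‖ ^ 2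
          ≤ (N : ℝ)⁻¹ * (N * ‖h‖ ^ 2) := by
            apply mul_le_mul_of_nonneg_left _ (inv_nonneg.mpr hNpos.le)
            simpa [nsmul_eq_mul] using hb
        _ = ‖h‖ ^ 2 := by field_simp
    calc Real.sqrt ((N : ℝ)⁻¹ * ∑ i : Fin N, ‖h i‖ ^ 2)
        ≤ Real.sqrt (‖h‖ ^ 2) := Real.sqrt_le_sqrt hsum
      _ = ‖h‖ := by rw [Real.sqrt_sq (norm_nonneg h)]
  have htmem : t ∈ Metric.ball (0:ℝ) δ ∩ Ioi 0 := by
    constructor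
    · simp only [Metric.mem_ball, Real.dist_eq, sub_zero, abs_of_pos htpos]
      exact lt_of_le_of_lt htle (lt_of_lt_of_le hhn (min_le_left _ _))
    · exact htpos
  have habs : |e t / t| < ε := hδ htmem
  have het : e t ≤ ε * t := by
    have h1 : e t / t ≤ |e t / t| := le_abs_self _
    have h2 : e t / t < ε := lt_of_le_of_lt h1 habs
    calc e t = (e t / t) * t := (div_mul_cancel₀ _ htpos.ne').symm
      _ ≤ ε * t := mul_le_mul_of_nonneg_right h2.le htpos.le
  have hfin : ‖F x ν - F x ((N : ℝ≥0∞)⁻¹ • ∑ i : Fin N, Measure.dirac (xv i)) - L h‖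
      ≤ ε * ‖h‖ := by
    calc ‖F x ν - F x ((N : ℝ≥0∞)⁻¹ • ∑ i : Fin N, Measure.dirac (xv i)) - L h‖
        = ‖F x ν - F x ((N : ℝ≥0∞)⁻¹ • ∑ i : Fin N, Measure.dirac (xv i)) -
            ∫ p, G p.1 (p.2 - p.1) ∂γ‖ := by rw [hint1]
      _ ≤ e t := key
      _ ≤ ε * t := het
      _ ≤ ε * ‖h‖ := mul_le_mul_of_nonneg_left htle hε.le
  have hyeq : (fun i => (xv + h) i) = y := by rw [hy]
  simpa [hyeq, hν] using hfin
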